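/- Let M* be a maximum cardinality matching and M a matching in a finite simple graph G, and let k ≥ 1. If every M-augmenting path in G has length at least 2k + 1, then |M| ≥ (k/(k+1)) · |M*|. -/

import Mathlib

/-- The set of vertices covered by a set `M` of edges. -/
def coveredVerts {V : Type*} (M : Set (Sym2 V)) : Set V := {x : V | ∃ e ∈ M, x ∈ e}

/-- `M` is a matching in `G`: a set of edges of `G` that are pairwise non-adjacent. -/
def IsMatchingSet {V : Type*} (G : SimpleGraph V) (M : Set (Sym2 V)) : Prop :=
  M ⊆ G.edgeSet ∧ ∀ e ∈ M, ∀ f ∈ M, e ≠ f → ∀ x : V, x ∈ e → x ∉ f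

/-- `p` is an `M`-augmenting path: a simple path with at least one edge, both of whose
endpoints are `M`-free, and whose edges alternate between `E ∖ M` and `M` (the edge at
position `i` belongs to `M` iff `i` is odd). -/
def IsAugPath {V : Type*} (G : SimpleGraph V) (M : Set (Sym2 V)) {u v : V}
    (p : G.Walk u v) : Prop :=
  p.IsPath ∧ 0 < p.length ∧ u ∉ coveredVerts M ∧ v ∉ coveredVerts M ∧
    ∀ (i : ℕ) (h : i < p.edges.length), (p.edges.get ⟨i, h⟩ ∈ M ↔ Odd i)

/-- An `M`-augmenting path in `G`, bundled with its endpoints. -/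
structure AugPath {V : Type*} (G : SimpleGraph V) (M : Set (Sym2 V)) where
  src : V
  tgt : V
  walk : G.Walk src tgt
  isAug : IsAugPath G M walk

open SimpleGraph

namespace AuxHK

variable {V : Type*} {G : SimpleGraph V}

lemma edges_get {u v : V} (p : G.Walk u v) : ∀ (i : ℕ) (h : i < p.edges.length),
    p.edges.get ⟨i, h⟩ = s(p.getVert i, p.getVert (i + 1)) := by
  induction p with
  | nil => intro i h; simp at h
  | cons hadj q ih =>
    intro i h
    cases i with
    | zero => simp [Walk.getVert_zero, Walk.getVert_cons_succ]
    | succ j =>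
      simp only [Walk.edges_cons, List.get_cons_succ, Walk.getVert_cons_succ]
      exact ih j (by simpa [Walk.edges_cons] using h)

lemma support_get {u v : V} (p : G.Walk u v) : ∀ (i : ℕ) (h : i < p.support.length),
    p.support.get ⟨i, h⟩ = p.getVert i := by
  induction p with
  | nil => intro i h; simp at h; simp [h, Walk.getVert_zero]
  | cons hadj q ih =>
    intro i h
    cases i with
    | zero => simp [Walk.getVert_zero]
    | succ j =>
      simp only [Walk.support_cons, List.get_cons_succ, Walk.getVert_cons_succ]
      exact ih j (by simpa [Walk.support_cons] using h)

lemma mem_support_iff_getVert {u v w : V} (p : G.Walk u v) :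
    w ∈ p.support ↔ ∃ j, j ≤ p.length ∧ p.getVert j = w := by
  rw [List.mem_iff_get]
  constructor
  · rintro ⟨⟨j, hj⟩, rfl⟩
    exact ⟨j, by simpa [Walk.length_support, Nat.lt_succ_iff] using hj, (support_get p j hj).symm⟩
  · rintro ⟨j, hj, rfl⟩
    exact ⟨⟨j, by simp [Walk.length_support, Nat.lt_succ_iff, hj]⟩,
      support_get p j (by simp [Walk.length_support, Nat.lt_succ_iff, hj])⟩

lemma isPath_getVert_inj {u v : V} {p : G.Walk u v} (hp : p.IsPath) {i j : ℕ}
    (hi : i ≤ p.length) (hj : j ≤ p.length) (h : p.getVert i = p.getVert j) : i = j := by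
  have hi' : i < p.support.length := by simp [Walk.length_support, Nat.lt_succ_iff, hi]
  have hj' : j < p.support.length := by simp [Walk.length_support, Nat.lt_succ_iff, hj]
  have := (hp.support_nodup.get_inj_iff (i := ⟨i, hi'⟩) (j := ⟨j, hj'⟩))
  rw [support_get p i hi', support_get p j hj'] at this
  simpa using this.mp h

lemma mem_support_of_mem_edges {u v w : V} (p : G.Walk u v) {e : Sym2 V}
    (he : e ∈ p.edges) (hw : w ∈ e) : w ∈ p.support := by
  induction e with
  | _ a b =>
    rcases Sym2.mem_iff.mp hw with rfl | rfl
    · exact Walk.fst_mem_support_of_mem_edges p he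
    · exact Walk.snd_mem_support_of_mem_edges p he

lemma matchingSet_mono {M A : Set (Sym2 V)} (hM : IsMatchingSet G M) (hA : A ⊆ M) :
    IsMatchingSet G A :=
  ⟨hA.trans hM.1, fun e he f hf hne x hx => hM.2 e (hA he) f (hA hf) hne x hx⟩

lemma matchingSet_eq_of_share {M : Set (Sym2 V)} (hM : IsMatchingSet G M) {e f : Sym2 V}
    (he : e ∈ M) (hf : f ∈ M) {x : V} (hxe : x ∈ e) (hxf : x ∈ f) : e = f := by
  by_contra hne
  exact hM.2 e he f hf hne x hxe hxf

lemma ncard_coveredVerts {M : Set (Sym2 V)} [Fintype V] (hM : IsMatchingSet G M) :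
    (coveredVerts M).ncard = 2 * M.ncard := by
  have H : ∀ S : Set (Sym2 V), S.Finite → IsMatchingSet G S →
      (coveredVerts S).ncard = 2 * S.ncard := by
    intro S hfin
    refine @Set.Finite.induction_on _
      (fun S _ => IsMatchingSet G S → (coveredVerts S).ncard = 2 * S.ncard) S hfin
      (fun _ => by simp [coveredVerts]) ?_
    intro e S heS hSfin ih hM
    have hS : IsMatchingSet G S := matchingSet_mono hM (Set.subset_insert _ _)
    have hcov : coveredVerts (insert e S) = {x | x ∈ e} ∪ coveredVerts S := by
      ext x; simp [coveredVerts]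
    have hdisj : Disjoint {x | x ∈ e} (coveredVerts S) := by
      rw [Set.disjoint_left]
      rintro x hxe ⟨f, hfS, hxf⟩
      exact hM.2 e (Set.mem_insert _ _) f (Set.mem_insert_of_mem _ hfS)
        (fun h => heS (h ▸ hfS)) x hxe hxf
    have he2 : ({x | x ∈ e} : Set V).ncard = 2 := by
      have heE : e ∈ G.edgeSet := hM.1 (Set.mem_insert _ _)
      induction e with
      | _ a b =>
        have hab : a ≠ b := by
          intro h
          subst h
          rw [SimpleGraph.mem_edgeSet] at heE; exact G.irrefl heE
        have : {x | x ∈ s(a, b)} = ({a, b} : Set V) := by ext x; simp [Sym2.mem_iff]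
        rw [this, Set.ncard_pair hab]
    rw [hcov, Set.ncard_union_eq hdisj (Set.toFinite _) (Set.toFinite _), he2, ih hS,
      Set.ncard_insert_of_notMem heS hSfin]
    ring
  exact H M (Set.toFinite _) hM

lemma card_filter_mod_two (m : ℕ) :
    ((Finset.range m).filter (fun i => i % 2 = 1)).card = m / 2 ∧
    ((Finset.range m).filter (fun i => i % 2 = 0)).card = m - m / 2 := by
  induction m with
  | zero => simp
  | succ n ih =>
    rw [Finset.range_add_one, Finset.filter_insert, Finset.filter_insert]
    rcases Nat.even_or_odd n with he | ho
    · have h0 : n % 2 = 0 := Nat.even_iff.mp he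
      have h1 : ¬ n % 2 = 1 := by omega
      rw [if_neg h1, if_pos h0, Finset.card_insert_of_notMem (by simp)]
      exact ⟨by rw [ih.1]; omega, by rw [ih.2]; omega⟩
    · have h1 : n % 2 = 1 := Nat.odd_iff.mp ho
      have h0 : ¬ n % 2 = 0 := by omega
      rw [if_pos h1, if_neg h0, Finset.card_insert_of_notMem (by simp)]
      exact ⟨by rw [ih.1]; omega, by rw [ih.2]; omega⟩

lemma key [Fintype V] {M : Set (Sym2 V)}
    (hM : IsMatchingSet G M) {k : ℕ} (hk : 1 ≤ k)
    (hlong : ∀ p : AugPath G M, 2 * k + 1 ≤ p.walk.length) :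
    ∀ (n : ℕ) (A B : Set (Sym2 V)), A.ncard + B.ncard ≤ n → A ⊆ M →
      IsMatchingSet G B → B ∩ M ⊆ A →
      coveredVerts B ∩ coveredVerts M ⊆ coveredVerts A →
      k * B.ncard ≤ (k + 1) * A.ncard := by
  intro n
  induction n with
  | zero =>
    intro A B hn _ _ _ _
    have : B.ncard = 0 := by omega
    simp [this]
  | succ n ih =>
    intro A B hn hAM hBmat hBMsub hcovsub
    by_cases hle : B.ncard ≤ A.ncard
    · calc k * B.ncard ≤ k * A.ncard := Nat.mul_le_mul_left _ hle
        _ ≤ (k + 1) * A.ncard := Nat.mul_le_mul_right _ (by omega)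
    push_neg at hle
    have hMA : IsMatchingSet G A := matchingSet_mono hM hAM
    have hBsplit := Set.ncard_inter_add_ncard_diff_eq_ncard B A (Set.toFinite _)
    have hAsplit := Set.ncard_inter_add_ncard_diff_eq_ncard A B (Set.toFinite _)
    have hinterBA : (B ∩ A).ncard = (A ∩ B).ncard := by rw [Set.inter_comm]
    have hdiffcard : (A \ B).ncard < (B \ A).ncard := by omega
    have hBAmatch : IsMatchingSet G (B \ A) := matchingSet_mono hBmat Set.diff_subset
    have hABmatch : IsMatchingSet G (A \ B) := matchingSet_mono hMA Set.diff_subset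
    -- choose an `A`-free vertex covered by `B \ A`
    have hxex : ∃ x, x ∈ coveredVerts (B \ A) ∧ x ∉ coveredVerts A := by
      by_contra hcon
      push_neg at hcon
      have hsub : coveredVerts (B \ A) ⊆ coveredVerts (A \ B) := by
        rintro v ⟨e, heBA, hve⟩
        obtain ⟨f, hfA, hvf⟩ := hcon v ⟨e, heBA, hve⟩
        refine ⟨f, ⟨hfA, fun hfB => ?_⟩, hvf⟩
        have := matchingSet_eq_of_share hBmat heBA.1 hfB hve hvf
        exact heBA.2 (this ▸ hfA)
      have hle2 := Set.ncard_le_ncard hsub (Set.toFinite _)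
      rw [ncard_coveredVerts hBAmatch, ncard_coveredVerts hABmatch] at hle2
      omega
    obtain ⟨x, ⟨e0, he0BA, hxe0⟩, hxA⟩ := hxex
    obtain ⟨y, hey⟩ : ∃ y, s(x, y) = e0 := ⟨Sym2.Mem.other hxe0, Sym2.other_spec hxe0⟩
    have hadj : G.Adj x y := by
      have := hBmat.1 he0BA.1
      rw [← hey, SimpleGraph.mem_edgeSet] at this
      exact this
    -- the set of lengths of alternating paths starting at x
    set S : Set ℕ := {m | ∃ (z : V) (p : G.Walk x z), p.IsPath ∧ 0 < p.length ∧
      (∀ (i : ℕ) (h : i < p.edges.length),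
        p.edges.get ⟨i, h⟩ ∈ (if i % 2 = 1 then A \ B else B \ A)) ∧ p.length = m} with hSdef
    have hS1 : 1 ∈ S := by
      refine ⟨y, Walk.cons hadj Walk.nil, ?_, by simp, ?_, by simp⟩
      · rw [Walk.cons_isPath_iff]
        exact ⟨Walk.IsPath.nil, by simp [hadj.ne]⟩
      · intro i h
        have hi0 : i = 0 := by simpa using h
        subst hi0
        simpa [hey] using he0BA
    have hbdd : BddAbove S := by
      refine ⟨Fintype.card V, ?_⟩
      rintro m ⟨z, p, hp, _, _, rfl⟩
      exact hp.length_lt.le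
    obtain ⟨z, p, hpath, hpos, halt, hlenN⟩ := Nat.sSup_mem ⟨1, hS1⟩ hbdd
    have hmaxlen : ∀ m ∈ S, m ≤ p.length := fun m hm => hlenN ▸ le_csSup hbdd hm
    have hedgelen : p.edges.length = p.length := Walk.length_edges p
    have hgvlen : p.getVert p.length = z := Walk.getVert_length p
    have hget : ∀ (i : ℕ) (h : i < p.edges.length),
        p.edges.get ⟨i, h⟩ = s(p.getVert i, p.getVert (i + 1)) := edges_get p
    have haltA : ∀ (i : ℕ) (hi : i < p.edges.length), i % 2 = 1 →
        p.edges.get ⟨i, hi⟩ ∈ A \ B := by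
      intro i hi h
      have := halt i hi
      rwa [if_pos h] at this
    have haltB : ∀ (i : ℕ) (hi : i < p.edges.length), i % 2 = 0 →
        p.edges.get ⟨i, hi⟩ ∈ B \ A := by
      intro i hi h
      have := halt i hi
      rwa [if_neg (by omega)] at this
    have hgvinj : ∀ {i j : ℕ}, i ≤ p.length → j ≤ p.length →
        p.getVert i = p.getVert j → i = j := fun hi hj h => isPath_getVert_inj hpath hi hj h
    -- every vertex of p is on a B-edge of p (except possibly the end when length is even)
    have hcovBedge : ∀ j, j ≤ p.length → (j < p.length ∨ j % 2 = 1) →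
        ∃ i, ∃ hi : i < p.edges.length, i % 2 = 0 ∧ p.getVert j ∈ p.edges.get ⟨i, hi⟩ := by
      intro j hj hcase
      by_cases hjp : j % 2 = 1
      · refine ⟨j - 1, by omega, by omega, ?_⟩
        rw [hget]
        have hj1 : j - 1 + 1 = j := by omega
        rw [hj1]
        exact Sym2.mem_mk_right _ _
      · have hjlt : j < p.length := by rcases hcase with h | h; exact h; omega
        refine ⟨j, by omega, by omega, ?_⟩
        rw [hget]
        exact Sym2.mem_mk_left _ _
    have hcovAedge : ∀ j, j ≤ p.length → 0 < j → (j < p.length ∨ j % 2 = 0) →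
        ∃ i, ∃ hi : i < p.edges.length, i % 2 = 1 ∧ p.getVert j ∈ p.edges.get ⟨i, hi⟩ := by
      intro j hj hj0 hcase
      by_cases hjp : j % 2 = 1
      · have hjlt : j < p.length := by rcases hcase with h | h; exact h; omega
        refine ⟨j, by omega, hjp, ?_⟩
        rw [hget]
        exact Sym2.mem_mk_left _ _
      · refine ⟨j - 1, by omega, by omega, ?_⟩
        rw [hget]
        have hj1 : j - 1 + 1 = j := by omega
        rw [hj1]
        exact Sym2.mem_mk_right _ _
    -- no extension of the maximal path is possible
    have hextend : ∀ (w : V) (hzw : G.Adj z w), w ∉ p.support →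
        s(z, w) ∈ (if p.length % 2 = 1 then A \ B else B \ A) → False := by
      intro w hzw hws hf
      have hp' : (p.concat hzw).IsPath := by
        rw [← Walk.isPath_reverse_iff, Walk.reverse_concat, Walk.cons_isPath_iff]
        exact ⟨(Walk.isPath_reverse_iff p).mpr hpath, by
          simpa [Walk.support_reverse] using hws⟩
      have hmem : (p.concat hzw).length ∈ S := by
        refine ⟨w, p.concat hzw, hp', by simp [Walk.length_concat], ?_, rfl⟩
        intro i hi
        have hice : (p.concat hzw).edges = p.edges ++ [s(z, w)] := by
          rw [Walk.edges_concat, List.concat_eq_append]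
        by_cases hip : i < p.edges.length
        · have hgi : (p.concat hzw).edges.get ⟨i, hi⟩ = p.edges.get ⟨i, hip⟩ := by
            rw [List.get_eq_getElem, List.get_eq_getElem]
            simp only [hice]
            exact List.getElem_append_left hip
          rw [hgi]
          exact halt i hip
        · have hieq : i = p.edges.length := by
            have : i < (p.concat hzw).edges.length := hi
            rw [hice] at this
            simp at this
            omega
          subst hieq
          have hgi : (p.concat hzw).edges.get ⟨p.edges.length, hi⟩ = s(z, w) := by
            rw [List.get_eq_getElem]
            simp [hice]
          rw [hgi, hedgelen]
          exact hf
      have := hmaxlen _ hmem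
      rw [Walk.length_concat] at this
      omega
    -- if length is odd, the end of p is A-free
    have hzA : p.length % 2 = 1 → z ∉ coveredVerts A := by
      intro hodd
      rintro ⟨f, hfA, hzf⟩
      have hfB : f ∉ B := by
        intro hfB
        obtain ⟨i, hi, hieven, hzi⟩ := hcovBedge p.length le_rfl (Or.inr hodd)
        have hgB := haltB i hi hieven
        have hfg : f = p.edges.get ⟨i, hi⟩ :=
          matchingSet_eq_of_share hBmat hfB hgB.1 hzf (by rwa [hgvlen] at hzi)
        rw [hfg] at hfA
        exact hgB.2 hfA
      obtain ⟨w, hwf⟩ : ∃ w, s(z, w) = f := ⟨Sym2.Mem.other hzf, Sym2.other_spec hzf⟩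
      have hzw : G.Adj z w := by
        have := hM.1 (hAM hfA)
        rw [← hwf, SimpleGraph.mem_edgeSet] at this
        exact this
      have hwns : w ∉ p.support := by
        intro hws
        obtain ⟨j, hj, hjw⟩ := (mem_support_iff_getVert p).mp hws
        rcases Nat.eq_zero_or_pos j with rfl | hj0
        · rw [Walk.getVert_zero] at hjw
          exact hxA ⟨f, hfA, by rw [← hwf, hjw]; exact Sym2.mem_mk_right _ _⟩
        rcases eq_or_lt_of_le hj with rfl | hjlt
        · rw [Walk.getVert_length] at hjw
          exact hzw.ne' hjw.symm
        · obtain ⟨i, hi, hiodd, hwi⟩ := hcovAedge j (le_of_lt hjlt) hj0 (Or.inl hjlt)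
          have hgA := haltA i hi hiodd
          have hwff : w ∈ f := by rw [← hwf]; exact Sym2.mem_mk_right _ _
          have hfg : f = p.edges.get ⟨i, hi⟩ :=
            matchingSet_eq_of_share hMA hfA hgA.1 hwff (hjw ▸ hwi)
          have hzi : z ∈ p.edges.get ⟨i, hi⟩ := hfg ▸ hzf
          rw [hget i hi] at hzi
          have hi' : i < p.length := by omega
          rcases Sym2.mem_iff.mp hzi with h1 | h2
          · have := hgvinj le_rfl (le_of_lt hi')
              (by rw [Walk.getVert_length]; exact h1)
            omega
          · have := hgvinj le_rfl (by omega : i + 1 ≤ p.length)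
              (by rw [Walk.getVert_length]; exact h2)
            omega
      exact hextend w hzw hwns (by rw [if_pos hodd, hwf]; exact ⟨hfA, hfB⟩)
    -- if length is even, the end of p is B-free
    have hzB : p.length % 2 = 0 → z ∉ coveredVerts B := by
      intro heven
      rintro ⟨f, hfB, hzf⟩
      have hfA : f ∉ A := by
        intro hfA
        obtain ⟨i, hi, hiodd, hzi⟩ := hcovAedge p.length le_rfl hpos (Or.inr heven)
        have hgA := haltA i hi hiodd
        have hfg : f = p.edges.get ⟨i, hi⟩ :=
          matchingSet_eq_of_share hMA hfA hgA.1 hzf (by rwa [hgvlen] at hzi)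
        rw [hfg] at hfB
        exact hgA.2 hfB
      obtain ⟨w, hwf⟩ : ∃ w, s(z, w) = f := ⟨Sym2.Mem.other hzf, Sym2.other_spec hzf⟩
      have hzw : G.Adj z w := by
        have := hBmat.1 hfB
        rw [← hwf, SimpleGraph.mem_edgeSet] at this
        exact this
      have hwns : w ∉ p.support := by
        intro hws
        obtain ⟨j, hj, hjw⟩ := (mem_support_iff_getVert p).mp hws
        rcases eq_or_lt_of_le hj with rfl | hjlt
        · rw [Walk.getVert_length] at hjw
          exact hzw.ne' hjw.symm
        · obtain ⟨i, hi, hieven, hwi⟩ := hcovBedge j (le_of_lt hjlt) (Or.inl hjlt)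
          have hgB := haltB i hi hieven
          have hwff : w ∈ f := by rw [← hwf]; exact Sym2.mem_mk_right _ _
          have hfg : f = p.edges.get ⟨i, hi⟩ :=
            matchingSet_eq_of_share hBmat hfB hgB.1 hwff (hjw ▸ hwi)
          have hzi : z ∈ p.edges.get ⟨i, hi⟩ := hfg ▸ hzf
          rw [hget i hi] at hzi
          have hi' : i < p.length := by omega
          rcases Sym2.mem_iff.mp hzi with h1 | h2
          · have := hgvinj le_rfl (le_of_lt hi')
              (by rw [Walk.getVert_length]; exact h1)
            omega
          · have := hgvinj le_rfl (by omega : i + 1 ≤ p.length)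
              (by rw [Walk.getVert_length]; exact h2)
            omega
      exact hextend w hzw hwns (by rw [if_neg (by omega), hwf]; exact ⟨hfB, hfA⟩)
    -- cardinalities of the intersections with the edges of p
    have hnodup : p.edges.Nodup := hpath.edges_nodup
    have hio : ∀ r : ℕ, Set.InjOn (fun i => p.edges.getD i e0)
        {i | i < p.edges.length ∧ i % 2 = r} := by
      intro r i hi j hj h
      simp only [Set.mem_setOf_eq] at hi hj
      change p.edges.getD i e0 = p.edges.getD j e0 at h
      rw [(List.getD_eq_get _ e0 ⟨i, hi.1⟩ : p.edges.getD i e0 = p.edges.get ⟨i, hi.1⟩),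
        (List.getD_eq_get _ e0 ⟨j, hj.1⟩ : p.edges.getD j e0 = p.edges.get ⟨j, hj.1⟩)] at h
      have := (hnodup.get_inj_iff).mp h
      simpa using this
    have hidxcard : ∀ r : ℕ, ({i | i < p.edges.length ∧ i % 2 = r} : Set ℕ).ncard =
        ((Finset.range p.edges.length).filter (fun i => i % 2 = r)).card := by
      intro r
      rw [← Set.ncard_coe_finset]
      congr 1
      ext i
      simp [Finset.mem_filter, Finset.mem_range]
    have hAcap : A ∩ {e | e ∈ p.edges} =
        (fun i => p.edges.getD i e0) '' {i | i < p.edges.length ∧ i % 2 = 1} := by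
      ext e
      constructor
      · rintro ⟨heA, heP⟩
        obtain ⟨⟨i, hi⟩, hgi⟩ := List.mem_iff_get.mp heP
        have hiodd : i % 2 = 1 := by
          by_contra hcon
          have := haltB i hi (by omega)
          rw [hgi] at this
          exact this.2 heA
        exact ⟨i, ⟨hi, hiodd⟩, by
          show p.edges.getD i e0 = e
          rw [(List.getD_eq_get _ e0 ⟨i, hi⟩ : p.edges.getD i e0 = p.edges.get ⟨i, hi⟩), hgi]⟩
      · rintro ⟨i, ⟨hi, hiodd⟩, rfl⟩
        show p.edges.getD i e0 ∈ _
        rw [(List.getD_eq_get _ e0 ⟨i, hi⟩ : p.edges.getD i e0 = p.edges.get ⟨i, hi⟩)]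
        exact ⟨(haltA i hi hiodd).1, List.get_mem _ _⟩
    have hBcap : B ∩ {e | e ∈ p.edges} =
        (fun i => p.edges.getD i e0) '' {i | i < p.edges.length ∧ i % 2 = 0} := by
      ext e
      constructor
      · rintro ⟨heB, heP⟩
        obtain ⟨⟨i, hi⟩, hgi⟩ := List.mem_iff_get.mp heP
        have hieven : i % 2 = 0 := by
          by_contra hcon
          have := haltA i hi (by omega)
          rw [hgi] at this
          exact this.2 heB
        exact ⟨i, ⟨hi, hieven⟩, by
          show p.edges.getD i e0 = e
          rw [(List.getD_eq_get _ e0 ⟨i, hi⟩ : p.edges.getD i e0 = p.edges.get ⟨i, hi⟩), hgi]⟩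
      · rintro ⟨i, ⟨hi, hieven⟩, rfl⟩
        show p.edges.getD i e0 ∈ _
        rw [(List.getD_eq_get _ e0 ⟨i, hi⟩ : p.edges.getD i e0 = p.edges.get ⟨i, hi⟩)]
        exact ⟨(haltB i hi hieven).1, List.get_mem _ _⟩
    have hAcapcard : (A ∩ {e | e ∈ p.edges}).ncard = p.length / 2 := by
      rw [hAcap, Set.ncard_image_of_injOn (hio 1), hidxcard 1,
        (card_filter_mod_two p.edges.length).1, hedgelen]
    have hBcapcard : (B ∩ {e | e ∈ p.edges}).ncard = p.length - p.length / 2 := by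
      rw [hBcap, Set.ncard_image_of_injOn (hio 0), hidxcard 0,
        (card_filter_mod_two p.edges.length).2, hedgelen]
    -- the reduced sets
    set A' : Set (Sym2 V) := A \ {e | e ∈ p.edges} with hA'def
    set B' : Set (Sym2 V) := B \ {e | e ∈ p.edges} with hB'def
    have hA'eq : A'.ncard + p.length / 2 = A.ncard := by
      have h1 : A' = A \ (A ∩ {e | e ∈ p.edges}) := by
        rw [hA'def]; ext e; simp
      rw [h1, ← hAcapcard]
      exact Set.ncard_diff_add_ncard_of_subset Set.inter_subset_left (Set.toFinite _)
    have hB'eq : B'.ncard + (p.length - p.length / 2) = B.ncard := by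
      have h1 : B' = B \ (B ∩ {e | e ∈ p.edges}) := by
        rw [hB'def]; ext e; simp
      rw [h1, ← hBcapcard]
      exact Set.ncard_diff_add_ncard_of_subset Set.inter_subset_left (Set.toFinite _)
    have hA'M : A' ⊆ M := Set.diff_subset.trans hAM
    have hB'mat : IsMatchingSet G B' := matchingSet_mono hBmat Set.diff_subset
    have hB'Msub : B' ∩ M ⊆ A' := by
      rintro e ⟨⟨heB, heP⟩, heM⟩
      have heA : e ∈ A := hBMsub ⟨heB, heM⟩
      refine ⟨heA, fun hep => ?_⟩
      obtain ⟨⟨i, hi⟩, hgi⟩ := List.mem_iff_get.mp hep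
      by_cases hiodd : i % 2 = 1
      · have := haltA i hi hiodd
        rw [hgi] at this
        exact this.2 heB
      · have := haltB i hi (by omega)
        rw [hgi] at this
        exact this.2 heA
    have hcov' : coveredVerts B' ∩ coveredVerts M ⊆ coveredVerts A' := by
      rintro v ⟨⟨g, ⟨hgB, hgP⟩, hvg⟩, hvM⟩
      obtain ⟨f, hfA, hvf⟩ := hcovsub ⟨⟨g, hgB, hvg⟩, hvM⟩
      refine ⟨f, ⟨hfA, fun hfP => ?_⟩, hvf⟩
      have hvs : v ∈ p.support := mem_support_of_mem_edges p hfP hvf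
      obtain ⟨j, hj, hjv⟩ := (mem_support_iff_getVert p).mp hvs
      by_cases hcase : j < p.length ∨ j % 2 = 1
      · obtain ⟨i, hi, hie, hji⟩ := hcovBedge j hj hcase
        have hgB2 := haltB i hi hie
        have hgg : g = p.edges.get ⟨i, hi⟩ :=
          matchingSet_eq_of_share hBmat hgB hgB2.1 hvg (hjv ▸ hji)
        exact hgP (hgg ▸ List.get_mem _ _)
      · push_neg at hcase
        have hlen0 : p.length % 2 = 0 := by omega
        have hvz : v = z := by
          rw [← hjv]
          have hje : j = p.length := by omega
          rw [hje, Walk.getVert_length]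
        exact (hzB hlen0) (hvz ▸ ⟨g, hgB, hvg⟩)
    have hone : 1 ≤ p.length - p.length / 2 := by omega
    have hsum : A'.ncard + B'.ncard ≤ n := by omega
    have hrec := ih A' B' hsum hA'M hB'mat hB'Msub hcov'
    by_cases hpar : p.length % 2 = 1
    · -- p is an M-augmenting path of length ≥ 2k+1
      have hxB : x ∈ coveredVerts B := ⟨e0, he0BA.1, hxe0⟩
      have hxM : x ∉ coveredVerts M := fun h => hxA (hcovsub ⟨hxB, h⟩)
      have hzcovB : z ∈ coveredVerts B := by
        obtain ⟨i, hi, hie, hzi⟩ := hcovBedge p.length le_rfl (Or.inr hpar)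
        exact ⟨_, (haltB i hi hie).1, by rwa [hgvlen] at hzi⟩
      have hzM : z ∉ coveredVerts M := fun h => (hzA hpar) (hcovsub ⟨hzcovB, h⟩)
      have haug : IsAugPath G M p := by
        refine ⟨hpath, hpos, hxM, hzM, ?_⟩
        intro i hi
        constructor
        · intro heM
          by_cases hie : i % 2 = 1
          · rw [Nat.odd_iff]; exact hie
          · have h1 := haltB i hi (by omega)
            have h2 : p.edges.get ⟨i, hi⟩ ∈ A := hBMsub ⟨h1.1, heM⟩
            exact absurd h2 h1.2
        · intro hodd
          exact hAM (haltA i hi (Nat.odd_iff.mp hodd)).1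
      have hlonglen : 2 * k + 1 ≤ p.length := hlong ⟨x, z, p, haug⟩
      have hkle : k ≤ p.length / 2 := by omega
      have e2 : B.ncard = B'.ncard + (p.length / 2 + 1) := by omega
      calc k * B.ncard = k * B'.ncard + (k * (p.length / 2) + k) := by rw [e2]; ring
        _ ≤ (k + 1) * A'.ncard + (k * (p.length / 2) + p.length / 2) :=
            Nat.add_le_add hrec (Nat.add_le_add_left hkle _)
        _ = (k + 1) * (A'.ncard + p.length / 2) := by ring
        _ = (k + 1) * A.ncard := by rw [hA'eq]
    · have e2 : B.ncard = B'.ncard + p.length / 2 := by omega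
      calc k * B.ncard = k * B'.ncard + k * (p.length / 2) := by rw [e2]; ring
        _ ≤ (k + 1) * A'.ncard + (k + 1) * (p.length / 2) :=
            Nat.add_le_add hrec (Nat.mul_le_mul_right _ (by omega))
        _ = (k + 1) * (A'.ncard + p.length / 2) := by ring
        _ = (k + 1) * A.ncard := by rw [hA'eq]

end AuxHK

/-- Nguyen–Onak / Hopcroft–Karp. Let `M*` be a maximum cardinality
matching and `M` a matching in a finite simple graph `G`, and let `k ≥ 1`.  If every
`M`-augmenting path has length at least `2k + 1`, then `|M| ≥ (k/(k+1))·|M*|`. -/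
theorem matching_card_ge_of_no_short_aug_path
    {V : Type*} [Fintype V] (G : SimpleGraph V) (M Mstar : Set (Sym2 V))
    (hM : IsMatchingSet G M) (hMstar : IsMatchingSet G Mstar)
    (hmax : ∀ M' : Set (Sym2 V), IsMatchingSet G M' → M'.ncard ≤ Mstar.ncard)
    (k : ℕ) (hk : 1 ≤ k)
    (hlong : ∀ p : AugPath G M, 2 * k + 1 ≤ p.walk.length) :
    ((k : ℝ) / (k + 1)) * (Mstar.ncard : ℝ) ≤ (M.ncard : ℝ) := by
  have hkey := AuxHK.key hM hk hlong (M.ncard + Mstar.ncard) M Mstar le_rfl subset_rfl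
    hMstar Set.inter_subset_right Set.inter_subset_right
  have hcast : ((k : ℝ)) * (Mstar.ncard : ℝ) ≤ ((k : ℝ) + 1) * (M.ncard : ℝ) := by
    exact_mod_cast hkey
  have hkpos : (0 : ℝ) < (k : ℝ) + 1 := by positivity
  rw [div_mul_eq_mul_div, div_le_iff₀ hkpos]
  nlinarith [hcast]
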